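/- Let τ_M > 0, τ_T > 0 and a_M ≥ a_T > 0 with a_M·τ_T ≥ a_T·τ_M. Then for every t ≥ 0 one has a_M·τ_M·Ψ(t/τ_M) ≥ a_T·τ_T·Ψ(t/τ_T), where Ψ(θ) = exp(−θ) + θ − 1; consequently the singular-region boundary t ↦ ∂Z*(t) = a_M·τ_M²·Υ(t/τ_M) − a_T·τ_T²·Υ(t/τ_T), whose derivative at t is a_M·τ_M·Ψ(t/τ_M) − a_T·τ_T·Ψ(t/τ_T), is monotone nondecreasing on [0, ∞). -/

import Mathlib

/-- Ψ(θ) = exp(−θ) + θ − 1 -/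
noncomputable def Psi (θ : ℝ) : ℝ := Real.exp (-θ) + θ - 1

/-- Υ(θ) = θ²/2 − exp(−θ) − θ + 1 -/
noncomputable def Upsilon (θ : ℝ) : ℝ := θ ^ 2 / 2 - Real.exp (-θ) - θ + 1

/-- The singular-region boundary ∂Z*(s) = a_M·τ_M²·Υ(s/τ_M) − a_T·τ_T²·Υ(s/τ_T). -/
noncomputable def singBdry (aM aT τM τT s : ℝ) : ℝ :=
  aM * τM ^ 2 * Upsilon (s / τM) - aT * τT ^ 2 * Upsilon (s / τT)

lemma expNeg_hasDeriv (x : ℝ) :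
    HasDerivAt (fun z : ℝ => Real.exp (-z)) (-Real.exp (-x)) x := by
  have := (hasDerivAt_neg x).exp
  simpa using this

lemma keyineq {x y : ℝ} (hx : 0 ≤ x) (hxy : x ≤ y) :
    x * (1 - Real.exp (-y)) ≤ y * (1 - Real.exp (-x)) := by
  set g : ℝ → ℝ := fun z => z * (1 - Real.exp (-x)) - x * (1 - Real.exp (-z)) with hg
  have hd : ∀ z : ℝ, HasDerivAt g ((1 - Real.exp (-x)) - x * Real.exp (-z)) z := by
    intro z
    have h1 : HasDerivAt (fun z : ℝ => z * (1 - Real.exp (-x))) (1 - Real.exp (-x)) z := by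
      simpa using (hasDerivAt_id z).mul_const (1 - Real.exp (-x))
    have h2 : HasDerivAt (fun z : ℝ => x * (1 - Real.exp (-z))) (x * Real.exp (-z)) z := by
      have : HasDerivAt (fun z : ℝ => 1 - Real.exp (-z)) (Real.exp (-z)) z := by
        have h := (hasDerivAt_const z (1:ℝ)).sub (expNeg_hasDeriv z)
        simp only [zero_sub, neg_neg] at h
        exact h
      simpa using this.const_mul x
    exact h1.sub h2
  have hmono : MonotoneOn g (Set.Ici x) := by
    apply monotoneOn_of_deriv_nonneg (convex_Ici x)
      (fun z _ => (hd z).differentiableAt.continuousAt.continuousWithinAt)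
      (fun z _ => (hd z).differentiableAt.differentiableWithinAt)
    intro z hz
    rw [interior_Ici] at hz
    rw [(hd z).deriv]
    have hzx : x ≤ z := le_of_lt hz
    have h1 : Real.exp (-z) ≤ Real.exp (-x) := Real.exp_le_exp.2 (by linarith)
    have h2 : (1 + x) * Real.exp (-x) ≤ 1 := by
      have h3 := Real.add_one_le_exp x
      have hinv : Real.exp (-x) * Real.exp x = 1 := by
        rw [← Real.exp_add]; simp
      nlinarith [Real.exp_pos x, Real.exp_pos (-x)]
    nlinarith [Real.exp_pos (-z), Real.exp_pos (-x)]
  have h0 : g x = 0 := by simp [hg]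
  have := hmono (Set.self_mem_Ici) (by exact hxy : y ∈ Set.Ici x) hxy
  rw [h0] at this
  simp only [hg] at this
  linarith

/-- Under maneuverability (a_M ≥ a_T > 0) and agility (a_M·τ_T ≥ a_T·τ_M) superiority,
a_M·τ_M·Ψ(t/τ_M) ≥ a_T·τ_T·Ψ(t/τ_T) for every t ≥ 0; consequently the singular-region
boundary t ↦ ∂Z*(t), whose derivative at t equals
a_M·τ_M·Ψ(t/τ_M) − a_T·τ_T·Ψ(t/τ_T), is monotone nondecreasing on [0, ∞). -/
theorem singBdry_monotone
    (τM τT aM aT : ℝ) (hτM : 0 < τM) (hτT : 0 < τT)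
    (haT : 0 < aT) (haM : aT ≤ aM) (hagil : aT * τM ≤ aM * τT) :
    (∀ t : ℝ, 0 ≤ t → aT * τT * Psi (t / τT) ≤ aM * τM * Psi (t / τM)) ∧
    (∀ t : ℝ, HasDerivAt (fun s => singBdry aM aT τM τT s)
      (aM * τM * Psi (t / τM) - aT * τT * Psi (t / τT)) t) ∧
    MonotoneOn (fun s => singBdry aM aT τM τT s) (Set.Ici (0 : ℝ)) := by
  -- derivative of s ↦ Psi (s / τ)
  have hPsiD : ∀ (τ : ℝ), 0 < τ → ∀ t : ℝ,
      HasDerivAt (fun s => Psi (s / τ)) ((1 - Real.exp (-(t / τ))) / τ) t := by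
    intro τ hτ t
    have hdiv : HasDerivAt (fun s : ℝ => s / τ) (1 / τ) t := by
      simpa using (hasDerivAt_id t).div_const τ
    have hPsi : HasDerivAt Psi (1 - Real.exp (-(t / τ))) (t / τ) := by
      unfold Psi
      have := ((expNeg_hasDeriv (t / τ)).add (hasDerivAt_id (t / τ))).sub_const 1
      simpa [sub_eq_add_neg, add_comm] using this
    have := hPsi.comp t hdiv
    simpa [div_eq_mul_inv, mul_comm, Function.comp_def] using this
  -- derivative of f(t) = aM τM Psi(t/τM) - aT τT Psi(t/τT)
  have hfD : ∀ t : ℝ, HasDerivAt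
      (fun s => aM * τM * Psi (s / τM) - aT * τT * Psi (s / τT))
      (aM * (1 - Real.exp (-(t / τM))) - aT * (1 - Real.exp (-(t / τT)))) t := by
    intro t
    have h1 := (hPsiD τM hτM t).const_mul (aM * τM)
    have h2 := (hPsiD τT hτT t).const_mul (aT * τT)
    have := h1.sub h2
    have e1 : aM * τM * ((1 - Real.exp (-(t / τM))) / τM) = aM * (1 - Real.exp (-(t / τM))) := by
      field_simp
    have e2 : aT * τT * ((1 - Real.exp (-(t / τT))) / τT) = aT * (1 - Real.exp (-(t / τT))) := by
      field_simp
    rw [e1, e2] at this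
    exact this
  -- f' nonneg on [0,∞)
  have hf'nn : ∀ t : ℝ, 0 ≤ t →
      aT * (1 - Real.exp (-(t / τT))) ≤ aM * (1 - Real.exp (-(t / τM))) := by
    intro t ht
    rcases le_or_gt τM τT with hc | hc
    · have hx : t / τT ≤ t / τM := div_le_div_of_nonneg_left ht hτM hc
      have h1 : Real.exp (-(t / τM)) ≤ Real.exp (-(t / τT)) := Real.exp_le_exp.2 (by linarith)
      have h2 : Real.exp (-(t / τT)) ≤ 1 := by
        rw [Real.exp_le_one_iff]
        have : 0 ≤ t / τT := div_nonneg ht hτT.le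
        linarith
      nlinarith
    · -- τT < τM
      have hx : t / τM ≤ t / τT := div_le_div_of_nonneg_left ht hτT hc.le
      have hx0 : 0 ≤ t / τM := div_nonneg ht hτM.le
      have hkey := keyineq hx0 hx
      -- (t/τM)(1-e^{-t/τT}) ≤ (t/τT)(1-e^{-t/τM})
      rcases eq_or_lt_of_le ht with h0 | ht'
      · simp [← h0]
      · have hτ : τT * (1 - Real.exp (-(t / τT))) ≤ τM * (1 - Real.exp (-(t / τM))) := by
          have hm : 0 < τM * τT / t := by positivity
          have := mul_le_mul_of_nonneg_left hkey hm.le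
          calc τT * (1 - Real.exp (-(t / τT)))
              = (τM * τT / t) * (t / τM * (1 - Real.exp (-(t / τT)))) := by
                field_simp
            _ ≤ (τM * τT / t) * (t / τT * (1 - Real.exp (-(t / τM)))) := this
            _ = τM * (1 - Real.exp (-(t / τM))) := by field_simp
        have hxe : 0 ≤ 1 - Real.exp (-(t / τM)) := by
          have : Real.exp (-(t / τM)) ≤ 1 := by
            rw [Real.exp_le_one_iff]; linarith
          linarith
        -- aT τT (1-e^{-y}) ≤ aT τM (1-e^{-x}) ≤ aM τT (1-e^{-x})
        have h3 : aT * (τT * (1 - Real.exp (-(t / τT)))) ≤ aT * (τM * (1 - Real.exp (-(t / τM)))) :=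
          mul_le_mul_of_nonneg_left hτ haT.le
        have h4 : aT * τM * (1 - Real.exp (-(t / τM))) ≤ aM * τT * (1 - Real.exp (-(t / τM))) :=
          mul_le_mul_of_nonneg_right hagil hxe
        have hτT' : (0:ℝ) < τT := hτT
        nlinarith
  -- Part 1
  have part1 : ∀ t : ℝ, 0 ≤ t → aT * τT * Psi (t / τT) ≤ aM * τM * Psi (t / τM) := by
    intro t ht
    set f : ℝ → ℝ := fun s => aM * τM * Psi (s / τM) - aT * τT * Psi (s / τT) with hf
    have hmono : MonotoneOn f (Set.Ici (0:ℝ)) := by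
      apply monotoneOn_of_deriv_nonneg (convex_Ici 0)
        (fun z _ => (hfD z).differentiableAt.continuousAt.continuousWithinAt)
        (fun z _ => (hfD z).differentiableAt.differentiableWithinAt)
      intro z hz
      rw [interior_Ici] at hz
      rw [(hfD z).deriv]
      have := hf'nn z hz.le
      linarith
    have h0 : f 0 = 0 := by simp [hf, Psi]
    have := hmono Set.self_mem_Ici (by exact ht : t ∈ Set.Ici (0:ℝ)) ht
    rw [h0] at this
    simp only [hf] at this
    linarith
  -- derivative of singBdry
  have hUpsD : ∀ θ : ℝ, HasDerivAt Upsilon (Psi θ) θ := by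
    intro θ
    unfold Upsilon Psi
    have h1 : HasDerivAt (fun z : ℝ => z ^ 2 / 2) θ θ := by
      have := ((hasDerivAt_pow 2 θ)).div_const 2
      simpa using this
    have := ((h1.sub (expNeg_hasDeriv θ)).sub (hasDerivAt_id θ)).add_const 1
    simpa [sub_eq_add_neg, add_comm, add_left_comm] using this
  have hderiv : ∀ t : ℝ, HasDerivAt (fun s => singBdry aM aT τM τT s)
      (aM * τM * Psi (t / τM) - aT * τT * Psi (t / τT)) t := by
    intro t
    have hc : ∀ (τ : ℝ), 0 < τ → HasDerivAt (fun s : ℝ => Upsilon (s / τ)) (Psi (t / τ) / τ) t := by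
      intro τ hτ
      have hdiv : HasDerivAt (fun s : ℝ => s / τ) (1 / τ) t := by
        simpa using (hasDerivAt_id t).div_const τ
      have := (hUpsD (t / τ)).comp t hdiv
      simpa [div_eq_mul_inv, mul_comm, Function.comp_def] using this
    have h1 := (hc τM hτM).const_mul (aM * τM ^ 2)
    have h2 := (hc τT hτT).const_mul (aT * τT ^ 2)
    have := h1.sub h2
    have e1 : aM * τM ^ 2 * (Psi (t / τM) / τM) = aM * τM * Psi (t / τM) := by
      field_simp
    have e2 : aT * τT ^ 2 * (Psi (t / τT) / τT) = aT * τT * Psi (t / τT) := by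
      field_simp
    rw [e1, e2] at this
    exact this.congr_deriv rfl
  refine ⟨part1, hderiv, ?_⟩
  apply monotoneOn_of_deriv_nonneg (convex_Ici 0)
    (fun z _ => (hderiv z).differentiableAt.continuousAt.continuousWithinAt)
    (fun z _ => (hderiv z).differentiableAt.differentiableWithinAt)
  intro z hz
  rw [interior_Ici] at hz
  rw [(hderiv z).deriv]
  have := part1 z hz.le
  linarith
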